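/- Suppose the Fréchet derivative f' is uniformly continuous on C, the stepsizes (γ_k) are chosen by line minimization for φ = f + g, and for some σ ∈ (1,2] the constant C > 0 is a finite curvature constant of order σ of f over C (i.e., f(x + γ(s−x)) ≤ f(x) + ⟨f'(x), γ(s−x)⟩ + (γ^σ/σ)·C for all x, s ∈ C, γ ∈ (0,1]). Then the sequence (x_k) generated by the generalized Frank–Wolfe algorithm satisfies, for all k ≥ 1, φ(x_k) − φ* ≤ θ_0 / (1 + (1/σ)·θ_0^{1/(σ−1)}·C^{1/(1−σ)}·k)^{σ−1}, where θ_0 = φ(x_0) − φ*; in particular φ(x_k) − φ* = O(1/k^{σ−1}). -/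

import Mathlib

set_option maxHeartbeats 1000000
open Filter Topology Set

lemma fw_sigma_pow {σ : ℝ} (h1 : 1 < σ) : 1 + 1/σ ≤ σ ^ (1/(σ-1)) := by
  have hσ0 : (0:ℝ) < σ := by linarith
  have hlog : 1 - 1/σ ≤ Real.log σ := by
    have h := Real.log_le_sub_one_of_pos (inv_pos.mpr hσ0)
    rw [Real.log_inv] at h
    have : -Real.log σ ≤ 1/σ - 1 := by rw [one_div]; linarith
    linarith
  have h2 : Real.exp (1/σ) ≤ σ ^ (1/(σ-1)) := by
    rw [Real.rpow_def_of_pos hσ0]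
    apply Real.exp_le_exp.mpr
    have hσ1 : (0:ℝ) < σ - 1 := by linarith
    have h3 : (σ-1)/σ ≤ Real.log σ := by
      have : 1 - 1/σ = (σ-1)/σ := by field_simp
      linarith [hlog, this ▸ hlog]
    have := mul_le_mul_of_nonneg_right h3 (le_of_lt (one_div_pos.mpr hσ1))
    calc 1/σ = (σ-1)/σ * (1/(σ-1)) := by field_simp
      _ ≤ Real.log σ * (1/(σ-1)) := this
  have h4 : 1/σ + 1 ≤ Real.exp (1/σ) := Real.add_one_le_exp _
  linarith

lemma fw_grad_ineq {X : Type*} [NormedAddCommGroup X] [NormedSpace ℝ X]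
    (f : X → ℝ) (D : X →L[ℝ] ℝ) (x y : X)
    (hconv : ConvexOn ℝ Set.univ f) (hd : HasFDerivAt f D x) :
    f x + D (y - x) ≤ f y := by
  set v := y - x with hv
  have hφconv : ConvexOn ℝ Set.univ (fun t : ℝ => f (x + t • v)) := by
    have h := hconv.comp_affineMap (AffineMap.lineMap x y)
    have : (f ∘ (AffineMap.lineMap x y : ℝ →ᵃ[ℝ] X)) = fun t : ℝ => f (x + t • v) := by
      funext t
      simp [AffineMap.lineMap_apply_module', hv]
      rw [add_comm]
    rw [this] at h
    simpa using h
  have h1 : HasDerivAt (fun t : ℝ => x + t • v) v 0 := by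
    simpa using ((hasDerivAt_id (0:ℝ)).smul_const v).const_add x
  have h2 : HasDerivAt (fun t : ℝ => f (x + t • v)) (D v) 0 := by
    have hd' : HasFDerivAt f D (x + (0:ℝ) • v) := by simpa using hd
    exact hd'.comp_hasDerivAt 0 h1
  have h3 : D v ≤ slope (fun t : ℝ => f (x + t • v)) 0 1 :=
    hφconv.le_slope_of_hasDerivAt (mem_univ _) (mem_univ _) one_pos h2
  have hx1 : x + (1:ℝ) • v = y := by rw [one_smul, hv]; abel
  have hx0 : x + (0:ℝ) • v = x := by simp
  rw [slope_def_field] at h3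
  simp only [hx1, hx0] at h3
  norm_num at h3
  linarith


lemma fw_rec (σ Cf : ℝ) (hσ1 : 1 < σ) (hσ2 : σ ≤ 2) (hCf : 0 < Cf)
    (θ : ℕ → ℝ) (hnn : ∀ k, 0 ≤ θ k) (hmono : ∀ k, θ (k+1) ≤ θ k)
    (hrec : ∀ k, ∀ u : ℝ, 0 < u → u ≤ 1 → θ (k+1) ≤ (1-u) * θ k + u ^ σ / σ * Cf) :
    ∀ k : ℕ, θ k ≤ θ 0 / (1 + 1/σ * (θ 0) ^ (1/(σ-1)) * Cf ^ (1/(1-σ)) * k) ^ (σ-1) := by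
  have hσ0 : (0:ℝ) < σ := by linarith
  have hσ1' : (0:ℝ) < σ - 1 := by linarith
  have hle0 : ∀ k, θ k ≤ θ 0 := by
    intro k; induction k with
    | zero => exact le_refl _
    | succ n ih => exact (hmono n).trans ih
  rcases eq_or_lt_of_le (hnn 0) with h0 | h0
  · -- θ 0 = 0
    intro k
    rw [← h0, Real.zero_rpow (by positivity : 1/(σ-1) ≠ 0)]
    simp only [mul_zero, zero_mul, mul_zero, add_zero, zero_mul]
    rw [Real.one_rpow, zero_div]
    rw [← h0] at hle0
    exact hle0 k
  · -- θ 0 > 0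
    set θ0 := θ 0 with hθ0def
    have hD : (0:ℝ) < Cf ^ (1/(1-σ)) := Real.rpow_pos_of_pos hCf _
    set D := Cf ^ (1/(1-σ)) with hDdef
    have ht0 : (0:ℝ) < θ0 ^ (1/(σ-1)) := Real.rpow_pos_of_pos h0 _
    set t := θ0 ^ (1/(σ-1)) * D with htdef
    have ht : (0:ℝ) < t := mul_pos ht0 hD
    set c := 1/σ * θ0 ^ (1/(σ-1)) * D with hcdef
    have hc : (0:ℝ) < c := by positivity
    have hct : c = t / σ := by rw [htdef]; ring
    have e1 : 1/(σ-1) * (σ-1) = 1 := by field_simp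
    have e2 : 1/(1-σ) * (σ-1) = -1 := by
      rw [div_mul_eq_mul_div, one_mul, div_eq_iff (by linarith : (1:ℝ)-σ ≠ 0)]; ring
    have htpow : t ^ (σ-1) = θ0 / Cf := by
      rw [htdef, Real.mul_rpow ht0.le hD.le, hDdef, ← Real.rpow_mul h0.le,
        ← Real.rpow_mul hCf.le, e1, e2, Real.rpow_one, Real.rpow_neg_one, div_eq_mul_inv]
    intro k
    induction k with
    | zero => simp; exact le_rfl
    | succ n ih =>
      have hA : (0:ℝ) < 1 + c * n := by positivity
      set A := 1 + c * (n:ℝ) with hAdef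
      have hcast : 1 + c * ((n:ℕ)+1 : ℕ) = A + c := by push_cast; ring
      rw [show ((n+1 : ℕ) : ℝ) = (n : ℝ) + 1 by push_cast; ring]
      have hgoalden : 1 + c * ((n:ℝ)+1) = A + c := by rw [hAdef]; ring
      rw [hgoalden]
      set s := t / A with hsdef
      have hs0 : (0:ℝ) < s := div_pos ht hA
      have hAc : A + c = A * (1 + s/σ) := by
        rw [hct, hsdef]; field_simp
      have hbk : θ0 / A ^ (σ-1) = Cf * s ^ (σ-1) := by
        rw [hsdef, Real.div_rpow ht.le hA.le, htpow]
        field_simp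
      rcases le_or_gt s 1 with hs1 | hs1
      · -- small case
        have h1 := hrec n s hs0 hs1
        have h2 : θ n ≤ Cf * s ^ (σ-1) := by rw [← hbk]; exact ih
        have hspow : s ^ σ = s ^ (σ-1) * s := by
          have h := Real.rpow_add hs0 (σ-1) 1
          rw [Real.rpow_one, show σ - 1 + 1 = σ by ring] at h
          exact h
        have hw0 : (0:ℝ) ≤ (σ-1) * s / σ := by positivity
        set w := (σ-1) * s / σ with hwdef
        have hw1 : w < 1 := by
          rw [hwdef, div_lt_one hσ0]
          nlinarith
        have hB : (1 + s/σ) ^ (σ-1) ≤ 1 + w := by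
          have := rpow_one_add_le_one_add_mul_self
            (le_trans (by norm_num) (div_nonneg hs0.le hσ0.le)) hσ1'.le (by linarith : σ - 1 ≤ 1)
          rw [hwdef]
          calc (1 + s/σ) ^ (σ-1) ≤ 1 + (σ-1) * (s/σ) := this
            _ = 1 + (σ-1) * s / σ := by ring
        have hBpos : (0:ℝ) < (1 + s/σ) ^ (σ-1) :=
          Real.rpow_pos_of_pos (by positivity) _
        -- θ (n+1) ≤ (1-s) θ n + s^σ/σ Cf ≤ Cf s^{σ-1} (1 - w)
        have hstep : θ (n+1) ≤ Cf * s ^ (σ-1) * (1 - w) := by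
          have hs1' : (0:ℝ) ≤ 1 - s := by linarith
          have : (1-s) * θ n ≤ (1-s) * (Cf * s ^ (σ-1)) :=
            mul_le_mul_of_nonneg_left h2 hs1'
          calc θ (n+1) ≤ (1-s) * θ n + s ^ σ / σ * Cf := h1
            _ ≤ (1-s) * (Cf * s ^ (σ-1)) + (s ^ (σ-1) * s) / σ * Cf := by
                rw [← hspow]; linarith
            _ = Cf * s ^ (σ-1) * (1 - w) := by rw [hwdef]; field_simp; ring
        -- target: Cf s^{σ-1} (1-w) ≤ θ0 / (A (1+s/σ))^{σ-1}
        have hden : (A * (1 + s/σ)) ^ (σ-1) = A ^ (σ-1) * (1 + s/σ) ^ (σ-1) :=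
          Real.mul_rpow hA.le (by positivity)
        have hfinal : Cf * s ^ (σ-1) * (1 - w) ≤ θ0 / (A + c) ^ (σ-1) := by
          rw [hAc, hden]
          have hApow : (0:ℝ) < A ^ (σ-1) := Real.rpow_pos_of_pos hA _
          rw [← div_div, hbk, le_div_iff₀ hBpos]
          have hcs : (0:ℝ) ≤ Cf * s ^ (σ-1) := by positivity
          have hkey : (1 - w) * ((1 + s/σ) ^ (σ-1)) ≤ 1 := by
            have h1w : (0:ℝ) ≤ 1 - w := by linarith
            calc (1 - w) * ((1 + s/σ) ^ (σ-1)) ≤ (1 - w) * (1 + w) :=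
                  mul_le_mul_of_nonneg_left hB h1w
              _ = 1 - w^2 := by ring
              _ ≤ 1 := by nlinarith
          calc Cf * s ^ (σ-1) * (1 - w) * (1 + s/σ) ^ (σ-1)
              = (Cf * s ^ (σ-1)) * ((1 - w) * ((1 + s/σ) ^ (σ-1))) := by ring
            _ ≤ (Cf * s ^ (σ-1)) * 1 := mul_le_mul_of_nonneg_left hkey hcs
            _ = Cf * s ^ (σ-1) := by ring
        exact hstep.trans hfinal
      · -- big case: use u = 1
        have h1 := hrec n 1 one_pos le_rfl
        rw [Real.one_rpow] at h1
        have h1' : θ (n+1) ≤ Cf / σ := by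
          calc θ (n+1) ≤ (1-1) * θ n + 1 / σ * Cf := h1
            _ = Cf / σ := by ring
        have hAt : A < t := by
          have := (one_lt_div hA).mp (hsdef ▸ hs1)
          linarith
        have hAcle : A + c ≤ t * σ ^ (1/(σ-1)) := by
          have h2 : A + c < t + t/σ := by rw [hct]; linarith
          have h3 : t + t/σ = t * (1 + 1/σ) := by ring
          have h4 : t * (1 + 1/σ) ≤ t * σ ^ (1/(σ-1)) :=
            mul_le_mul_of_nonneg_left (fw_sigma_pow hσ1) ht.le
          linarith
        have hpow2 : (A + c) ^ (σ-1) ≤ σ * (θ0 / Cf) := by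
          have hAC0 : (0:ℝ) ≤ A + c := by positivity
          have := Real.rpow_le_rpow hAC0 hAcle hσ1'.le
          have heq : (t * σ ^ (1/(σ-1))) ^ (σ-1) = (θ0/Cf) * σ := by
            rw [Real.mul_rpow ht.le (Real.rpow_pos_of_pos hσ0 _).le,
              ← Real.rpow_mul hσ0.le, e1, Real.rpow_one, htpow]
          rw [heq] at this
          linarith
        have hACpos : (0:ℝ) < (A + c) ^ (σ-1) :=
          Real.rpow_pos_of_pos (by positivity) _
        have hfinal : Cf / σ ≤ θ0 / (A + c) ^ (σ-1) := by
          rw [div_le_div_iff₀ hσ0 hACpos]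
          have := mul_le_mul_of_nonneg_left hpow2 hCf.le
          calc Cf * (A + c) ^ (σ-1) ≤ Cf * (σ * (θ0/Cf)) := this
            _ = θ0 * σ := by field_simp
        exact h1'.trans hfinal


/-- **Rate of convergence of the generalized Frank–Wolfe algorithm with line
minimization** (Theorem 5.4). For the composite objective `φ = f + g`, if `f'` is
uniformly continuous on `C`, `Cf > 0` is a curvature constant of order `σ ∈ (1,2]` of
`f` over `C`, and the stepsizes are chosen by line minimization for `φ`, then for all
`k ≥ 1`, `φ(x_k) − φ* ≤ θ₀ / (1 + (1/σ) θ₀^{1/(σ−1)} Cf^{1/(1−σ)} k)^{σ−1}`, where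
`θ₀ = φ(x_0) − φ*`; in particular `φ(x_k) − φ* = O(1/k^{σ−1})`. -/
theorem stmt_18
    {X : Type*} [NormedAddCommGroup X] [NormedSpace ℝ X] [CompleteSpace X]
    (C : Set X) (hCne : C.Nonempty) (hCcl : IsClosed C)
    (hCbd : Bornology.IsBounded C) (hCcv : Convex ℝ C)
    (f : X → ℝ) (f' : X → X →L[ℝ] ℝ)
    (hfconv : ConvexOn ℝ Set.univ f)
    (hfderiv : ∀ x : X, HasFDerivAt f (f' x) x)
    (hfUC : UniformContinuousOn f' C)
    (σ : ℝ) (hσ : σ ∈ Set.Ioc (1 : ℝ) 2)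
    (Cf : ℝ) (hCf : 0 < Cf)
    (hcurv : ∀ x ∈ C, ∀ s ∈ C, ∀ γ ∈ Set.Ioc (0 : ℝ) 1,
      f (x + γ • (s - x)) ≤ f x + f' x (γ • (s - x)) + γ ^ σ / σ * Cf)
    (g : X → EReal)
    (hgproper : ∃ z : X, g z ≠ ⊤) (hgnebot : ∀ z : X, g z ≠ ⊥)
    (hglsc : LowerSemicontinuous g)
    (hgconv : ∀ z w : X, ∀ lam : ℝ, 0 < lam → lam < 1 →
      g (lam • z + (1 - lam) • w) ≤ (lam : EReal) * g z + ((1 - lam : ℝ) : EReal) * g w)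
    (hgC : ∀ z ∈ C, g z ≠ ⊤)
    (xstar : X) (hxstarC : xstar ∈ C)
    (hxstarmin : ∀ y ∈ C, (f xstar : EReal) + g xstar ≤ (f y : EReal) + g y)
    (x xbar : ℕ → X) (γ : ℕ → ℝ)
    (hx0 : x 0 ∈ C)
    (hxbarC : ∀ k, xbar k ∈ C)
    (hxbarmin : ∀ k, ∀ y ∈ C,
      (f' (x k) (xbar k) : EReal) + g (xbar k) ≤ (f' (x k) y : EReal) + g y)
    (hγ : ∀ k, γ k ∈ Set.Icc (0 : ℝ) 1)
    (hupdate : ∀ k, x (k + 1) = x k + γ k • (xbar k - x k))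
    (hlinemin : ∀ k, ∀ γ' ∈ Set.Icc (0 : ℝ) 1,
      (f (x k + γ k • (xbar k - x k)) : EReal) + g (x k + γ k • (xbar k - x k)) ≤
        (f (x k + γ' • (xbar k - x k)) : EReal) + g (x k + γ' • (xbar k - x k))) :
    ∀ k : ℕ, 1 ≤ k →
      (f (x k) + (g (x k)).toReal) - (f xstar + (g xstar).toReal) ≤
        ((f (x 0) + (g (x 0)).toReal) - (f xstar + (g xstar).toReal)) /
          (1 + 1 / σ *
              ((f (x 0) + (g (x 0)).toReal) - (f xstar + (g xstar).toReal))
                ^ (1 / (σ - 1)) * Cf ^ (1 / (1 - σ)) * k) ^ (σ - 1) := by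
  obtain ⟨hσ1, hσ2⟩ := hσ
  -- membership of iterates
  have hxC : ∀ k, x k ∈ C := by
    intro k; induction k with
    | zero => exact hx0
    | succ n ih =>
      rw [hupdate n]
      exact hCcv.add_smul_sub_mem ih (hxbarC n) (hγ n)
  have hmem : ∀ k, ∀ u ∈ Set.Icc (0:ℝ) 1, x k + u • (xbar k - x k) ∈ C := by
    intro k u hu
    exact hCcv.add_smul_sub_mem (hxC k) (hxbarC k) hu
  -- g as real on C
  have hgr : ∀ z ∈ C, g z = (((g z).toReal : ℝ) : EReal) :=
    fun z hz => (EReal.coe_toReal (hgC z hz) (hgnebot z)).symm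
  set θ : ℕ → ℝ := fun k =>
    (f (x k) + (g (x k)).toReal) - (f xstar + (g xstar).toReal) with hθdef
  -- nonnegativity
  have hnn : ∀ k, 0 ≤ θ k := by
    intro k
    have h := hxstarmin (x k) (hxC k)
    rw [hgr _ hxstarC, hgr _ (hxC k)] at h
    have h' : f xstar + (g xstar).toReal ≤ f (x k) + (g (x k)).toReal := by
      exact_mod_cast h
    simp only [hθdef]
    linarith
  -- monotonicity
  have hmono : ∀ k, θ (k+1) ≤ θ k := by
    intro k
    have h := hlinemin k 0 ⟨le_refl _, zero_le_one⟩
    rw [← hupdate k] at h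
    simp only [zero_smul, add_zero] at h
    rw [hgr _ (hxC (k+1)), hgr _ (hxC k)] at h
    have h' : f (x (k+1)) + (g (x (k+1))).toReal ≤ f (x k) + (g (x k)).toReal := by
      exact_mod_cast h
    simp only [hθdef]
    linarith
  -- descent inequality
  have hrec : ∀ k, ∀ u : ℝ, 0 < u → u ≤ 1 → θ (k+1) ≤ (1-u) * θ k + u ^ σ / σ * Cf := by
    intro k u hu0 hu1
    set y := x k + u • (xbar k - x k) with hydef
    have hyC : y ∈ C := hmem k u ⟨hu0.le, hu1⟩
    -- line minimization
    have h1 : f (x (k+1)) + (g (x (k+1))).toReal ≤ f y + (g y).toReal := by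
      have h := hlinemin k u ⟨hu0.le, hu1⟩
      rw [← hupdate k] at h
      rw [hgr _ (hxC (k+1)), hgr _ hyC] at h
      exact_mod_cast h
    -- curvature
    have h2 : f y ≤ f (x k) + u * f' (x k) (xbar k - x k) + u ^ σ / σ * Cf := by
      have h := hcurv (x k) (hxC k) (xbar k) (hxbarC k) u ⟨hu0, hu1⟩
      rw [map_smul] at h
      simpa [hydef, smul_eq_mul] using h
    -- convexity of g
    have h3 : (g y).toReal ≤ u * (g (xbar k)).toReal + (1-u) * (g (x k)).toReal := by
      rcases eq_or_lt_of_le hu1 with rfl | hu1'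
      · have hy' : y = xbar k := by rw [hydef, one_smul]; abel
        rw [hy']; simp
      · have h := hgconv (xbar k) (x k) u hu0 hu1'
        have harg : u • xbar k + (1-u) • x k = y := by
          rw [hydef]; module
        rw [harg, hgr _ hyC, hgr _ (hxbarC k), hgr _ (hxC k)] at h
        exact_mod_cast h
    -- optimality of xbar
    have h4 : f' (x k) (xbar k) + (g (xbar k)).toReal ≤
        f' (x k) xstar + (g xstar).toReal := by
      have h := hxbarmin k xstar hxstarC
      rw [hgr _ (hxbarC k), hgr _ hxstarC] at h
      exact_mod_cast h
    -- gradient inequality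
    have h5 : f (x k) + (f' (x k) xstar - f' (x k) (x k)) ≤ f xstar := by
      have h := fw_grad_ineq f (f' (x k)) (x k) xstar hfconv (hfderiv (x k))
      rw [map_sub] at h
      linarith
    have hFd : f' (x k) (xbar k - x k) = f' (x k) (xbar k) - f' (x k) (x k) :=
      map_sub _ _ _
    have hkey : f' (x k) (xbar k - x k) + (g (xbar k)).toReal ≤
        (f xstar + (g xstar).toReal) - f (x k) := by
      rw [hFd]; linarith
    have hkey2 : u * (f' (x k) (xbar k - x k) + (g (xbar k)).toReal) ≤
        u * ((f xstar + (g xstar).toReal) - f (x k)) :=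
      mul_le_mul_of_nonneg_left hkey hu0.le
    simp only [hθdef]
    nlinarith [h1, h2, h3, hkey2]
  -- apply the recursion lemma
  intro k _
  exact fw_rec σ Cf hσ1 hσ2 hCf θ hnn hmono hrec k
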